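/- Let A be a k × n matrix with rational entries and let m_1, …, m_r be linear functionals on ℝ^n with rational coefficients. If max_j m_j(x) > 0 for every nonzero rational vector x ∈ ℚ^n satisfying Ax ≤ 0 componentwise, then max_j m_j(x) > 0 for every nonzero real vector x ∈ ℝ^n satisfying Ax ≤ 0. -/

import Mathlib

/-- Rational solutions of a rational homogeneous linear system are dense in the
real solutions. -/
lemma dense_ker {n : ℕ} : ∀ (s : ℕ) (C : Matrix (Fin s) (Fin n) ℚ) (x : Fin n → ℝ),
    (∀ i, ∑ j, (C i j : ℝ) * x j = 0) → ∀ ε : ℝ, 0 < ε →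
    ∃ q : Fin n → ℚ, (∀ i, ∑ j, (C i j) * q j = 0) ∧ ∀ j, |(q j : ℝ) - x j| < ε := by
  intro s
  induction s with
  | zero =>
    intro C x _ ε hε
    have h : ∀ j : Fin n, ∃ qj : ℚ, x j - ε < (qj : ℝ) ∧ (qj : ℝ) < x j + ε := by
      intro j; exact exists_rat_btwn (by linarith)
    refine ⟨fun j => (h j).choose, fun i => i.elim0, fun j => ?_⟩
    have := (h j).choose_spec
    rw [abs_lt]; constructor <;> linarith [this.1, this.2]
  | succ s IH =>
    intro C x hx ε hε
    set c : Fin n → ℚ := C 0 with hc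
    by_cases hz : ∀ p, c p = 0
    · obtain ⟨q, hq1, hq2⟩ := IH (fun i j => C i.succ j) x (fun i => hx i.succ) ε hε
      refine ⟨q, fun i => ?_, hq2⟩
      refine Fin.cases ?_ (fun i => hq1 i) i
      refine Finset.sum_eq_zero fun j _ => ?_
      rw [show C 0 j = 0 from hz j, zero_mul]
    · push_neg at hz
      obtain ⟨p, hp⟩ := hz
      have hpR : ((c p : ℝ)) ≠ 0 := by exact_mod_cast hp
      set D : Matrix (Fin s) (Fin n) ℚ :=
        fun i j => C i.succ j - (C i.succ p / c p) * c j with hD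
      have hxD : ∀ i, ∑ j, (D i j : ℝ) * x j = 0 := by
        intro i
        have h1 := hx i.succ
        have h0 := hx 0
        have : ∑ j, (D i j : ℝ) * x j
            = ∑ j, (C i.succ j : ℝ) * x j
              - ((C i.succ p : ℝ) / (c p : ℝ)) * ∑ j, (c j : ℝ) * x j := by
          rw [Finset.mul_sum, ← Finset.sum_sub_distrib]
          refine Finset.sum_congr rfl fun j _ => ?_
          simp only [hD]
          push_cast
          ring
        rw [this, h1, h0]
        ring
      set Mc : ℝ := ∑ j ∈ Finset.univ.erase p, |(c j : ℝ)| with hMc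
      have hMc0 : 0 ≤ Mc := Finset.sum_nonneg fun j _ => abs_nonneg _
      have hcp0 : 0 < |(c p : ℝ)| := abs_pos.mpr hpR
      set δ : ℝ := ε * |(c p : ℝ)| / (|(c p : ℝ)| + Mc) with hδdef
      have hδpos : 0 < δ := by positivity
      have hδε : δ ≤ ε := by
        rw [hδdef, div_le_iff₀ (by linarith)]
        nlinarith
      obtain ⟨q', hq'1, hq'2⟩ := IH D x hxD δ hδpos
      set v : ℚ := -(∑ j ∈ Finset.univ.erase p, c j * q' j) / c p with hv
      set q : Fin n → ℚ := Function.update q' p v with hq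
      have hqp : q p = v := Function.update_self _ _ _
      have hqne : ∀ j, j ≠ p → q j = q' j := fun j hj => Function.update_of_ne hj _ _
      -- row 0 over ℚ
      have hrow0 : ∑ j, c j * q j = 0 := by
        rw [← Finset.add_sum_erase _ _ (Finset.mem_univ p), hqp]
        rw [Finset.sum_congr rfl (fun j hj => by
          rw [hqne j (Finset.ne_of_mem_erase hj)])]
        rw [hv, mul_comm (c p), div_mul_cancel₀ _ hp]; ring
      have hDp : ∀ i, D i p = 0 := by
        intro i; simp only [hD]; field_simp; simp
      have hrowD : ∀ i, ∑ j, D i j * q j = 0 := by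
        intro i
        have : ∑ j, D i j * q j = ∑ j, D i j * q' j := by
          rw [← Finset.add_sum_erase _ _ (Finset.mem_univ p),
              ← Finset.add_sum_erase _ (fun j => D i j * q' j) (Finset.mem_univ p)]
          rw [hDp i]
          simp only [zero_mul, zero_add]
          exact Finset.sum_congr rfl fun j hj => by
            rw [hqne j (Finset.ne_of_mem_erase hj)]
        rw [this, hq'1 i]
      have hrows : ∀ i : Fin (s+1), ∑ j, C i j * q j = 0 := by
        intro i
        refine Fin.cases hrow0 (fun i => ?_) i
        have hsplit : ∀ j, C i.succ j = D i j + (C i.succ p / c p) * c j := by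
          intro j; simp only [hD]; ring
        calc ∑ j, C i.succ j * q j
            = ∑ j, (D i j * q j + (C i.succ p / c p) * (c j * q j)) := by
              refine Finset.sum_congr rfl fun j _ => ?_
              rw [hsplit j]; ring
          _ = ∑ j, D i j * q j + (C i.succ p / c p) * ∑ j, c j * q j := by
              rw [Finset.sum_add_distrib, Finset.mul_sum]
          _ = 0 := by rw [hrowD i, hrow0]; ring
      -- approximation
      have hxp : (c p : ℝ) * x p = -(∑ j ∈ Finset.univ.erase p, (c j : ℝ) * x j) := by
        have := hx 0
        rw [← Finset.add_sum_erase _ _ (Finset.mem_univ p)] at this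
        linarith
      have happrox : ∀ j, |(q j : ℝ) - x j| < ε := by
        intro j
        by_cases hj : j = p
        · subst hj
          have hsum : ∑ i ∈ Finset.univ.erase j, (c i : ℝ) * ((q' i : ℝ) - x i)
              = ∑ i ∈ Finset.univ.erase j, (c i : ℝ) * (q' i : ℝ)
                - ∑ i ∈ Finset.univ.erase j, (c i : ℝ) * x i := by
            rw [← Finset.sum_sub_distrib]
            exact Finset.sum_congr rfl fun i _ => mul_sub _ _ _
          have hvx : (q j : ℝ) - x j
              = (-(∑ i ∈ Finset.univ.erase j, (c i : ℝ) * ((q' i : ℝ) - x i))) / (c j : ℝ) := by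
            rw [hqp, hv]
            push_cast
            rw [hsum, eq_div_iff hpR, sub_mul, div_mul_cancel₀ _ hpR]
            linarith [hxp]
          rw [hvx, abs_div]
          rw [div_lt_iff₀ hcp0]
          calc |(-(∑ i ∈ Finset.univ.erase j, (c i : ℝ) * ((q' i : ℝ) - x i)))|
              = |∑ i ∈ Finset.univ.erase j, (c i : ℝ) * ((q' i : ℝ) - x i)| := abs_neg _
            _ ≤ ∑ i ∈ Finset.univ.erase j, |(c i : ℝ)| * |(q' i : ℝ) - x i| := by
                refine (Finset.abs_sum_le_sum_abs _ _).trans ?_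
                refine le_of_eq (Finset.sum_congr rfl fun i _ => abs_mul _ _)
            _ ≤ ∑ i ∈ Finset.univ.erase j, |(c i : ℝ)| * δ := by
                refine Finset.sum_le_sum fun i _ => ?_
                exact mul_le_mul_of_nonneg_left (le_of_lt (hq'2 i)) (abs_nonneg _)
            _ = Mc * δ := by rw [← Finset.sum_mul]
            _ < ε * |(c j : ℝ)| := by
                have h2 : 0 < |(c j : ℝ)| + Mc := by linarith
                rw [hδdef, mul_comm Mc, div_mul_eq_mul_div, div_lt_iff₀ h2]
                nlinarith [mul_pos (mul_pos hε hcp0) hcp0]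
        · rw [hqne j hj]
          exact lt_of_lt_of_le (hq'2 j) hδε
      exact ⟨q, hrows, happrox⟩

/-- Let `A` be a `k × n` rational matrix and `m_0, …, m_r` linear
functionals on `ℝⁿ` with rational coefficients. If `max_j m_j x > 0` for every nonzero
rational vector `x` with `A x ≤ 0` componentwise, then the same holds for every nonzero
real vector `x` with `A x ≤ 0` componentwise. -/
theorem stmt_2 (k n r : ℕ) (A : Matrix (Fin k) (Fin n) ℚ)
    (m : Fin (r + 1) → Fin n → ℚ)
    (hQ : ∀ x : Fin n → ℚ, x ≠ 0 → (∀ i, A.mulVec x i ≤ 0) →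
        0 < Finset.univ.sup' Finset.univ_nonempty fun j => ∑ i, m j i * x i) :
    ∀ x : Fin n → ℝ, x ≠ 0 →
      (∀ i, (A.map (fun a : ℚ => (a : ℝ))).mulVec x i ≤ 0) →
      0 < Finset.univ.sup' Finset.univ_nonempty fun j => ∑ i, (m j i : ℝ) * x i := by
  classical
  intro x hx hAx
  by_contra hcon
  push_neg at hcon
  have hmle : ∀ j : Fin (r+1), ∑ i, (m j i : ℝ) * x i ≤ 0 :=
    fun j => (Finset.sup'_le_iff _ _).mp hcon j (Finset.mem_univ j)
  have hAx' : ∀ i, ∑ j, (A i j : ℝ) * x j ≤ 0 := by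
    intro i
    have := hAx i
    simpa [Matrix.mulVec, dotProduct, Matrix.map_apply] using this
  -- the combined matrix
  set B : Matrix (Fin (k + (r+1))) (Fin n) ℚ :=
    fun i => Fin.addCases (fun i => A i) (fun j => m j) i with hB
  set b : Fin (k + (r+1)) → ℝ := fun i => ∑ j, (B i j : ℝ) * x j with hbdef
  have hb : ∀ i, b i ≤ 0 := by
    intro i
    refine Fin.addCases (fun i => ?_) (fun j => ?_) i
    · have : b (Fin.castAdd (r+1) i) = ∑ j, (A i j : ℝ) * x j := by
        simp [hbdef, hB]
      rw [this]; exact hAx' i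
    · have : b (Fin.natAdd k j) = ∑ i, (m j i : ℝ) * x i := by
        simp [hbdef, hB]
      rw [this]; exact hmle j
  -- the tight rows
  set C : Matrix (Fin (k + (r+1))) (Fin n) ℚ :=
    fun i j => if b i = 0 then B i j else 0 with hC
  have hxC : ∀ i, ∑ j, (C i j : ℝ) * x j = 0 := by
    intro i
    by_cases hbi : b i = 0
    · simp only [hC, if_pos hbi]
      exact hbi
    · simp [hC, if_neg hbi]
  -- a nonzero coordinate
  obtain ⟨t, ht⟩ := Function.ne_iff.mp hx
  have hxt : 0 < |x t| := abs_pos.mpr ht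
  -- choice of ε
  set f : Fin (k + (r+1)) → ℝ :=
    fun i => if b i = 0 then |x t| else (-(b i)) / (1 + ∑ j, |(B i j : ℝ)|) with hf
  have hfpos : ∀ i, 0 < f i := by
    intro i
    by_cases hbi : b i = 0
    · simp only [hf, if_pos hbi]; exact hxt
    · simp only [hf, if_neg hbi]
      have h1 : 0 < -(b i) := by
        have := hb i
        cases lt_or_eq_of_le this with
        | inl h => linarith
        | inr h => exact absurd h hbi
      have h2 : 0 < 1 + ∑ j, |(B i j : ℝ)| := by
        have : 0 ≤ ∑ j, |(B i j : ℝ)| := Finset.sum_nonneg fun j _ => abs_nonneg _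
        linarith
      positivity
  set E : Finset ℝ := insert |x t| (Finset.image f Finset.univ) with hE
  have hEne : E.Nonempty := ⟨|x t|, Finset.mem_insert_self _ _⟩
  set ε : ℝ := E.min' hEne with hεdef
  have hEpos : ∀ y ∈ E, 0 < y := by
    intro y hy
    rw [hE] at hy
    rcases Finset.mem_insert.mp hy with h | h
    · rw [h]; exact hxt
    · obtain ⟨i, _, hi⟩ := Finset.mem_image.mp h
      rw [← hi]; exact hfpos i
  have hεpos : 0 < ε := hEpos _ (E.min'_mem hEne)
  have hεxt : ε ≤ |x t| := Finset.min'_le _ _ (Finset.mem_insert_self _ _)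
  have hεf : ∀ i, ε ≤ f i := fun i =>
    Finset.min'_le _ _ (Finset.mem_insert_of_mem (Finset.mem_image_of_mem f (Finset.mem_univ i)))
  -- the rational approximation
  obtain ⟨q, hq1, hq2⟩ := dense_ker (k + (r+1)) C x hxC ε hεpos
  have hqne : q ≠ 0 := by
    intro h0
    have := hq2 t
    rw [h0] at this
    simp only [Pi.zero_apply, Rat.cast_zero, zero_sub, abs_neg] at this
    linarith
  -- all rows of B are ≤ 0 at q
  have hBq : ∀ i, ∑ j, B i j * q j ≤ 0 := by
    intro i
    by_cases hbi : b i = 0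
    · have : ∑ j, B i j * q j = ∑ j, C i j * q j := by
        refine Finset.sum_congr rfl fun j _ => ?_
        rw [hC]; simp [if_pos hbi]
      rw [this, hq1 i]
    · -- strict row: estimate over ℝ
      have hbneg : b i < 0 := lt_of_le_of_ne (hb i) hbi
      set M : ℝ := ∑ j, |(B i j : ℝ)| with hM
      have hM0 : 0 ≤ M := Finset.sum_nonneg fun j _ => abs_nonneg _
      have hfi : f i = (-(b i)) / (1 + M) := by rw [hf]; simp [if_neg hbi, hM]
      have h1M : 0 < 1 + M := by linarith
      have key : (↑(∑ j, B i j * q j) : ℝ) < 0 := by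
        push_cast
        have hsplit : ∑ j, (B i j : ℝ) * (q j : ℝ)
            = b i + ∑ j, (B i j : ℝ) * ((q j : ℝ) - x j) := by
          rw [hbdef]
          rw [← Finset.sum_add_distrib]
          refine Finset.sum_congr rfl fun j _ => ?_
          ring
        rw [hsplit]
        have hbound : ∑ j, (B i j : ℝ) * ((q j : ℝ) - x j) < -(b i) := by
          calc ∑ j, (B i j : ℝ) * ((q j : ℝ) - x j)
              ≤ |∑ j, (B i j : ℝ) * ((q j : ℝ) - x j)| := le_abs_self _
            _ ≤ ∑ j, |(B i j : ℝ)| * |(q j : ℝ) - x j| := by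
                refine (Finset.abs_sum_le_sum_abs _ _).trans ?_
                exact le_of_eq (Finset.sum_congr rfl fun j _ => abs_mul _ _)
            _ ≤ ∑ j, |(B i j : ℝ)| * ε :=
                Finset.sum_le_sum fun j _ =>
                  mul_le_mul_of_nonneg_left (le_of_lt (hq2 j)) (abs_nonneg _)
            _ = M * ε := by rw [← Finset.sum_mul]
            _ ≤ M * f i := mul_le_mul_of_nonneg_left (hεf i) hM0
            _ < (1 + M) * f i := by nlinarith [hfpos i]
            _ = -(b i) := by rw [hfi]; field_simp
        linarith
      exact_mod_cast le_of_lt (by exact_mod_cast key : (∑ j, B i j * q j : ℚ) < 0)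
  -- contradiction with hQ
  have hAq : ∀ i, A.mulVec q i ≤ 0 := by
    intro i
    have h1 : A.mulVec q i = ∑ j, B (Fin.castAdd (r+1) i) j * q j := by
      simp [Matrix.mulVec, dotProduct, hB]
    rw [h1]; exact hBq (Fin.castAdd (r+1) i)
  have hmq : ∀ j : Fin (r+1), ∑ i, m j i * q i ≤ 0 := by
    intro j
    have h1 : ∑ i, m j i * q i = ∑ i, B (Fin.natAdd k j) i * q i := by
      refine Finset.sum_congr rfl fun i _ => ?_
      simp [hB]
    rw [h1]; exact hBq (Fin.natAdd k j)
  have := hQ q hqne hAq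
  have hle : (Finset.univ.sup' Finset.univ_nonempty fun j => ∑ i, m j i * q i) ≤ 0 :=
    Finset.sup'_le _ _ fun j _ => hmq j
  linarith
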